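/- For any symmetric monotone norm ‖·‖ on ℝ^n with ρ := ‖(1,...,1)‖ / ‖e_1‖, there exists an ordered norm ‖·‖' (i.e., ‖x‖' = ⟨a, x^↓⟩ for some descending nonnegative weight vector a) such that ‖x‖ ≤ ‖x‖' ≤ 2(log₂ ρ + 1)·‖x‖ for all x ∈ ℝ_{\geq 0}^n. -/

import Mathlib

open Finset


lemma f_zero {n : ℕ} (f : (Fin n → ℝ) → ℝ)
    (h_hom : ∀ (c : ℝ) (x : Fin n → ℝ), f (c • x) = |c| * f x) : f 0 = 0 := by
  have := h_hom 0 0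
  simpa using this

lemma f_sum_le {n : ℕ} (f : (Fin n → ℝ) → ℝ)
    (h_tri : ∀ x y : Fin n → ℝ, f (x + y) ≤ f x + f y)
    (h_hom : ∀ (c : ℝ) (x : Fin n → ℝ), f (c • x) = |c| * f x)
    {ι : Type*} (s : Finset ι) (g : ι → Fin n → ℝ) :
    f (∑ i ∈ s, g i) ≤ ∑ i ∈ s, f (g i) := by
  classical
  induction s using Finset.cons_induction with
  | empty => simp [f_zero f h_hom]
  | cons a s ha ih =>
    rw [Finset.sum_cons, Finset.sum_cons]
    exact le_trans (h_tri _ _) (by linarith)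

lemma f_comb_le {n : ℕ} (f : (Fin n → ℝ) → ℝ)
    (h_tri : ∀ x y : Fin n → ℝ, f (x + y) ≤ f x + f y)
    (h_hom : ∀ (c : ℝ) (x : Fin n → ℝ), f (c • x) = |c| * f x)
    {ι : Type*} (s : Finset ι) (c : ι → ℝ) (g : ι → Fin n → ℝ)
    (hc : ∀ i ∈ s, 0 ≤ c i) :
    f (∑ i ∈ s, c i • g i) ≤ ∑ i ∈ s, c i * f (g i) := by
  refine le_trans (f_sum_le f h_tri h_hom s _) (Finset.sum_le_sum fun i hi => ?_)
  rw [h_hom, abs_of_nonneg (hc i hi)]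


open Fin.NatCast in
lemma finRotate_pow_apply (k : ℕ) (j : ℕ) (m : Fin (k+1)) :
    (finRotate (k+1) ^ j) m = m + (j : Fin (k+1)) := by
  induction j with
  | zero => simp
  | succ j ih =>
    rw [pow_succ', Equiv.Perm.mul_apply, ih, finRotate_succ_apply]
    push_cast
    rw [add_assoc]

lemma schur_step {n : ℕ} (f : (Fin n → ℝ) → ℝ)
    (h_tri : ∀ x y : Fin n → ℝ, f (x + y) ≤ f x + f y)
    (h_hom : ∀ (c : ℝ) (x : Fin n → ℝ), f (c • x) = |c| * f x)
    (h_sym : ∀ (σ : Equiv.Perm (Fin n)) (x : Fin n → ℝ), f (x ∘ σ) = f x)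
    (h_mono : ∀ x y : Fin n → ℝ, (∀ i, 0 ≤ x i) → x ≤ y → f x ≤ f y)
    (k : ℕ) (hk : 0 < k) (hkn : k ≤ n) (y : Fin n → ℝ) (hy : ∀ i, 0 ≤ y i) :
    (∑ m ∈ range k, if h : m < n then y ⟨m, h⟩ else 0) *
      f (fun i => if (i : ℕ) < k then (1:ℝ) else 0) ≤ (k : ℝ) * f y := by
  classical
  obtain ⟨k', rfl⟩ : ∃ k', k = k' + 1 := ⟨k - 1, (Nat.succ_pred_eq_of_pos hk).symm⟩
  set k := k' + 1 with hkdef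
  set χ : Fin n → ℝ := fun i => if (i : ℕ) < k then (1:ℝ) else 0 with hχ
  set w : Fin n → ℝ := fun i => if (i : ℕ) < k then y i else 0 with hw
  set S : ℝ := ∑ m ∈ range k, (if h : m < n then y ⟨m, h⟩ else 0) with hS
  have hSnn : 0 ≤ S := Finset.sum_nonneg fun m _ => by
    by_cases h : m < n <;> simp [h, hy]
  set e : Fin k ≃ {i : Fin n // (i : ℕ) < k} :=
    { toFun := fun m => ⟨⟨(m : ℕ), lt_of_lt_of_le m.2 hkn⟩, m.2⟩
      invFun := fun i => ⟨(i.1 : ℕ), i.2⟩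
      left_inv := fun m => rfl
      right_inv := fun i => rfl } with he
  set σ : Fin k → Equiv.Perm (Fin n) :=
    fun j => (finRotate k ^ (j : ℕ)).extendDomain e with hσ
  have hwe : ∀ m : Fin k, w (e m) = if h : (m : ℕ) < n then y ⟨(m : ℕ), h⟩ else 0 := by
    intro m
    have hm : ((m : ℕ)) < n := lt_of_lt_of_le m.2 hkn
    simp [he, hw, m.2, hm]
  have hSe : S = ∑ m : Fin k, w (e m) := by
    rw [hS, ← Fin.sum_univ_eq_sum_range (fun m => if h : m < n then y ⟨m, h⟩ else 0) k]
    exact Finset.sum_congr rfl fun m _ => (hwe m).symm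
  have hkey : (∑ j : Fin k, (w ∘ (σ j))) = S • χ := by
    funext i
    rw [Finset.sum_apply]
    by_cases hi : (i : ℕ) < k
    · have : ∀ j : Fin k, (w ∘ (σ j)) i = w (e (e.symm ⟨i, hi⟩ + j)) := by
        intro j
        have h1 : (σ j) i = (e ((finRotate k ^ (j : ℕ)) (e.symm ⟨i, hi⟩)) : Fin n) :=
          Equiv.Perm.extendDomain_apply_subtype _ e hi
        rw [Function.comp_apply, h1, finRotate_pow_apply, Fin.cast_val_eq_self]
      rw [Finset.sum_congr rfl fun j _ => this j]
      have := Equiv.sum_comp (Equiv.addLeft (e.symm ⟨i, hi⟩)) (fun m => w (e m))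
      simp only [Equiv.coe_addLeft] at this
      rw [this, ← hSe]
      simp [hχ, hi]
    · have : ∀ j : Fin k, (w ∘ (σ j)) i = 0 := by
        intro j
        have h1 : (σ j) i = i := Equiv.Perm.extendDomain_apply_not_subtype _ e hi
        simp [h1, hw, hi]
      rw [Finset.sum_congr rfl fun j _ => this j]
      simp [hχ, hi]
  have hfw : f w ≤ f y := by
    refine h_mono w y (fun i => by by_cases h : (i:ℕ) < k <;> simp [hw, h, hy]) ?_
    intro i
    by_cases h : (i:ℕ) < k <;> simp [hw, h, hy i]
  have h1 : f (S • χ) = S * f χ := by rw [h_hom, abs_of_nonneg hSnn]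
  have h2 : f (∑ j : Fin k, (w ∘ (σ j))) ≤ ∑ j : Fin k, f (w ∘ (σ j)) :=
    f_sum_le f h_tri h_hom Finset.univ _
  have h3 : ∀ j : Fin k, f (w ∘ (σ j)) = f w := fun j => h_sym (σ j) w
  calc S * f χ = f (S • χ) := h1.symm
    _ = f (∑ j : Fin k, (w ∘ (σ j))) := by rw [hkey]
    _ ≤ ∑ j : Fin k, f (w ∘ (σ j)) := h2
    _ = (k : ℝ) * f w := by
        rw [Finset.sum_congr rfl fun j _ => h3 j]
        simp [mul_comm]
    _ ≤ (k : ℝ) * f y := by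
        have : (0:ℝ) ≤ k := Nat.cast_nonneg k
        nlinarith [hfw]


/-- The descending rearrangement `x^↓` of a vector `x`. -/
noncomputable def sortDesc {n : ℕ} (x : Fin n → ℝ) : Fin n → ℝ :=
  fun i => x (Tuple.sort x i.rev)

theorem symmetric_norm_ordered_approx {n : ℕ} (hn : 0 < n)
    (f : (Fin n → ℝ) → ℝ)
    (h_tri : ∀ x y : Fin n → ℝ, f (x + y) ≤ f x + f y)
    (h_hom : ∀ (c : ℝ) (x : Fin n → ℝ), f (c • x) = |c| * f x)
    (h_sym : ∀ (σ : Equiv.Perm (Fin n)) (x : Fin n → ℝ), f (x ∘ σ) = f x)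
    (h_mono : ∀ x y : Fin n → ℝ, (∀ i, 0 ≤ x i) → x ≤ y → f x ≤ f y)
    (h_pos : 0 < f (Pi.single (⟨0, hn⟩ : Fin n) 1)) :
    ∃ a : Fin n → ℝ, Antitone a ∧ (∀ i, 0 ≤ a i) ∧
      ∀ x : Fin n → ℝ, (∀ i, 0 ≤ x i) →
        f x ≤ ∑ i, a i * sortDesc x i ∧
        ∑ i, a i * sortDesc x i ≤
          2 * (Real.logb 2 (f (fun _ => 1) / f (Pi.single (⟨0, hn⟩ : Fin n) 1)) + 1) * f x := by
  classical
  set c : ℝ := f (Pi.single (⟨0, hn⟩ : Fin n) 1) with hc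
  have hcpos : 0 < c := h_pos
  set χ : ℕ → Fin n → ℝ := fun k i => if (i : ℕ) < k then (1:ℝ) else 0 with hχ
  set B : ℕ → ℝ := fun k => f (χ k) with hB
  have hχ1 : χ 1 = Pi.single (⟨0, hn⟩ : Fin n) 1 := by
    funext i
    simp only [hχ, Pi.single_apply]
    by_cases h : (i : ℕ) < 1
    · have hi : i = ⟨0, hn⟩ := Fin.ext (by omega : (i:ℕ) = 0)
      simp [h, hi]
    · have hi : ¬ i = ⟨0, hn⟩ := fun hh => h (by simp [hh])
      simp [h, hi]
  have hB1 : B 1 = c := by rw [hB]; simp only; rw [hχ1]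
  have hχn : χ n = fun _ => (1:ℝ) := by funext i; simp [hχ, i.isLt]
  have hχnn : ∀ k, ∀ i, 0 ≤ χ k i := by
    intro k i; by_cases h : (i : ℕ) < k <;> simp [hχ, h]
  have hBmono : Monotone B := by
    intro k k' hkk
    refine h_mono _ _ (hχnn k) fun i => ?_
    by_cases h : (i : ℕ) < k
    · simp [hχ, h, lt_of_lt_of_le h hkk]
    · simp only [hχ]
      by_cases h' : (i : ℕ) < k' <;> simp [h, h']
  set ρ : ℝ := B n / c with hρ
  have hBn : B n = ρ * c := by rw [hρ]; field_simp
  have hρ1 : 1 ≤ ρ := by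
    rw [hρ, le_div_iff₀ hcpos, one_mul, ← hB1]
    exact hBmono hn
  have hρpos : 0 < ρ := lt_of_lt_of_le one_pos hρ1
  set T : ℕ := ⌊Real.logb 2 ρ⌋₊ with hT
  have hlognn : 0 ≤ Real.logb 2 ρ := Real.logb_nonneg one_lt_two hρ1
  have hTle : (T : ℝ) ≤ Real.logb 2 ρ := Nat.floor_le hlognn
  have h2T : (2:ℝ)^T ≤ ρ := by
    calc (2:ℝ)^T = (2:ℝ)^(T:ℝ) := (Real.rpow_natCast 2 T).symm
    _ ≤ (2:ℝ)^(Real.logb 2 ρ) := Real.rpow_le_rpow_of_exponent_le one_le_two hTle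
    _ = ρ := Real.rpow_logb (by norm_num) (by norm_num) hρpos
  have hρlt : ρ < (2:ℝ)^(T+1) := by
    calc ρ = (2:ℝ)^(Real.logb 2 ρ) := (Real.rpow_logb (by norm_num) (by norm_num) hρpos).symm
    _ < (2:ℝ)^((T:ℝ)+1) := Real.rpow_lt_rpow_of_exponent_lt one_lt_two (Nat.lt_floor_add_one _)
    _ = (2:ℝ)^(T+1) := by
        rw [← Real.rpow_natCast 2 (T+1)]
        push_cast
        ring_nf
  set K : ℕ → ℕ := fun t => sInf {k | 0 < k ∧ k ≤ n ∧ (2:ℝ)^t * c ≤ B k} with hK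
  have hKmem : ∀ t ≤ T, 0 < K t ∧ K t ≤ n ∧ (2:ℝ)^t * c ≤ B (K t) := by
    intro t ht
    have hne : Set.Nonempty {k : ℕ | 0 < k ∧ k ≤ n ∧ (2:ℝ)^t * c ≤ B k} := by
      refine ⟨n, hn, le_refl n, ?_⟩
      rw [hBn]
      have h1 : (2:ℝ)^t ≤ ρ := le_trans (pow_le_pow_right₀ one_le_two ht) h2T
      nlinarith
    have h2 := Nat.sInf_mem hne
    simp only [hK]
    exact h2
  have hKmin : ∀ t k, 0 < k → k ≤ n → (2:ℝ)^t * c ≤ B k → K t ≤ k := by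
    intro t k h1 h2 h3
    simp only [hK]
    exact Nat.sInf_le ⟨h1, h2, h3⟩
  have hBk : ∀ k, 1 ≤ k → k ≤ n →
      B k ≤ 2*c*∑ t ∈ range (T+1), (if K t ≤ k then (2:ℝ)^t else 0) := by
    intro k hk1 hkn'
    have hcB : c ≤ B k := hB1 ▸ hBmono hk1
    have hK0 : K 0 ≤ k := hKmin 0 k hk1 hkn' (by simpa using hcB)
    set Q := (range (T+1)).filter (fun t => K t ≤ k) with hQ
    have hQne : Q.Nonempty := ⟨0, by simp [hQ, hK0]⟩
    set s := Q.max' hQne with hs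
    have hsQ : s ∈ Q := Q.max'_mem hQne
    have hsT : s ≤ T := by
      have := (mem_filter.mp hsQ).1
      rw [mem_range] at this; omega
    have hsK : K s ≤ k := (mem_filter.mp hsQ).2
    have hBlt : B k < 2^(s+1) * c := by
      rcases lt_or_eq_of_le hsT with hlt | heq
      · by_contra hcon
        push_neg at hcon
        have hmem : K (s+1) ≤ k := hKmin (s+1) k hk1 hkn' hcon
        have : s + 1 ∈ Q := by
          simp only [hQ, mem_filter, mem_range]
          exact ⟨by omega, hmem⟩
        have := Q.le_max' _ this
        omega
      · have h1 : B k ≤ B n := hBmono hkn'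
        rw [hBn] at h1
        have h2 : ρ * c < 2^(T+1) * c := by nlinarith
        rw [heq]
        exact lt_of_le_of_lt h1 h2
    have hsum : (2:ℝ)^s ≤ ∑ t ∈ range (T+1), (if K t ≤ k then (2:ℝ)^t else 0) := by
      have := Finset.single_le_sum (f := fun t => if K t ≤ k then (2:ℝ)^t else 0)
        (fun t _ => by by_cases h : K t ≤ k <;> simp [h] <;> positivity)
        (mem_range.mpr (by omega : s < T+1))
      simpa [hsK] using this
    calc B k ≤ 2^(s+1) * c := le_of_lt hBlt
    _ = 2*c*(2:ℝ)^s := by ring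
    _ ≤ 2*c*∑ t ∈ range (T+1), (if K t ≤ k then (2:ℝ)^t else 0) := by
        apply mul_le_mul_of_nonneg_left hsum (by positivity)
  set a : Fin n → ℝ := fun i =>
    2*c*∑ t ∈ range (T+1), (if (i : ℕ) < K t then (2:ℝ)^t / (K t : ℝ) else 0) with ha
  have hann : ∀ i, 0 ≤ a i := by
    intro i
    apply mul_nonneg (by positivity)
    apply Finset.sum_nonneg
    intro t _
    by_cases h : (i : ℕ) < K t <;> simp [h] <;> positivity
  have haanti : Antitone a := by
    intro i j hij
    apply mul_le_mul_of_nonneg_left _ (by positivity)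
    apply Finset.sum_le_sum
    intro t _
    by_cases hj : (j : ℕ) < K t
    · have hi : (i : ℕ) < K t := lt_of_le_of_lt hij hj
      simp [hi, hj]
    · simp only [hj, if_false]
      by_cases hi : (i : ℕ) < K t <;> simp [hi] <;> positivity
  refine ⟨a, haanti, hann, ?_⟩
  intro x hx
  set y : Fin n → ℝ := sortDesc x with hy
  have hfy : f y = f x := by
    have hcomp : y = x ∘ (Fin.revPerm.trans (Tuple.sort x)) := by
      funext i; rfl
    rw [hcomp, h_sym]
  have hynn : ∀ i, 0 ≤ y i := fun i => hx _
  have hyanti : Antitone y := by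
    intro i j hij
    exact Tuple.monotone_sort x (Fin.rev_le_rev.mpr hij)
  have hfynn : 0 ≤ f y := by
    rw [← f_zero f h_hom]
    exact h_mono 0 y (fun i => le_refl 0) (fun i => hynn i)
  set y' : ℕ → ℝ := fun m => if h : m < n then y ⟨m, h⟩ else 0 with hy'
  have hy'nn : ∀ m, 0 ≤ y' m := by
    intro m
    by_cases h : m < n <;> simp [hy', h, hynn]
  have hy'n : y' n = 0 := by simp [hy']
  have hy'anti : ∀ m m', m ≤ m' → y' m' ≤ y' m := by
    intro m m' hmm
    by_cases h' : m' < n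
    · have h : m < n := lt_of_le_of_lt hmm h'
      simp only [hy', dif_pos h, dif_pos h']
      exact hyanti (by exact_mod_cast hmm : (⟨m, h⟩ : Fin n) ≤ ⟨m', h'⟩)
    · simp only [hy', dif_neg h']
      exact hy'nn m
  set S : ℕ → ℝ := fun k => ∑ m ∈ range k, y' m with hS
  have hSnn : ∀ k, 0 ≤ S k := fun k => Finset.sum_nonneg fun m _ => hy'nn m
  have hSy : ∀ k : ℕ, (k : ℝ) * y' (k - 1) ≤ S k := by
    intro k
    calc (k : ℝ) * y' (k-1) = ∑ _m ∈ range k, y' (k-1) := by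
          rw [Finset.sum_const, card_range, nsmul_eq_mul]
    _ ≤ S k := Finset.sum_le_sum fun m hm =>
        hy'anti m (k-1) (by rw [mem_range] at hm; omega)
  set d : ℕ → ℝ := fun k => y' (k-1) - y' k with hd
  have hdnn : ∀ k, 1 ≤ k → 0 ≤ d k := fun k hk =>
    sub_nonneg.mpr (hy'anti (k-1) k (by omega))
  have htel : ∀ m, m ≤ n → ∑ k ∈ Icc (m+1) n, d k = y' m := by
    intro m hm
    rw [← Finset.Ico_add_one_right_eq_Icc, sum_Ico_eq_sum_range]
    have hcg : ∀ j ∈ range (n+1-(m+1)),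
        d (m+1+j) = (fun i => y' (m+i)) j - (fun i => y' (m+i)) (j+1) := by
      intro j _
      simp only [hd]
      congr 2 <;> omega
    rw [Finset.sum_congr rfl hcg, Finset.sum_range_sub' (fun i => y' (m+i))]
    have h1 : m + (n + 1 - (m + 1)) = n := by omega
    simp only [add_zero, h1, hy'n, sub_zero]
  have hdecomp : y = ∑ k ∈ Icc 1 n, d k • χ k := by
    funext i
    rw [Finset.sum_apply]
    have hcg : ∀ k ∈ Icc 1 n, (d k • χ k) i = if (i:ℕ) < k then d k else 0 := by
      intro k _
      by_cases h : (i:ℕ) < k <;> simp [hχ, h]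
    rw [Finset.sum_congr rfl hcg, ← Finset.sum_filter]
    have hfilter : (Icc 1 n).filter (fun k => (i:ℕ) < k) = Icc ((i:ℕ)+1) n := by
      ext k
      simp only [mem_filter, mem_Icc]
      omega
    rw [hfilter, htel (i:ℕ) (le_of_lt i.isLt)]
    simp [hy', i.isLt]
  have step1 : f y ≤ ∑ k ∈ Icc 1 n, d k * B k := by
    calc f y = f (∑ k ∈ Icc 1 n, d k • χ k) := by rw [← hdecomp]
    _ ≤ ∑ k ∈ Icc 1 n, d k * f (χ k) :=
        f_comb_le f h_tri h_hom _ _ _ fun k hk => hdnn k (mem_Icc.mp hk).1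
    _ = ∑ k ∈ Icc 1 n, d k * B k := rfl
  have step2 : ∑ k ∈ Icc 1 n, d k * B k ≤
      2*c*∑ t ∈ range (T+1), (2:ℝ)^t * y' (K t - 1) := by
    have h1 : ∑ k ∈ Icc 1 n, d k * B k ≤
        ∑ k ∈ Icc 1 n, (2*c*∑ t ∈ range (T+1), (if K t ≤ k then d k * (2:ℝ)^t else 0)) := by
      refine Finset.sum_le_sum fun k hk => ?_
      rw [mem_Icc] at hk
      calc d k * B k ≤ d k * (2*c*∑ t ∈ range (T+1), (if K t ≤ k then (2:ℝ)^t else 0)) :=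
            mul_le_mul_of_nonneg_left (hBk k hk.1 hk.2) (hdnn k hk.1)
      _ = 2*c*∑ t ∈ range (T+1), (if K t ≤ k then d k * (2:ℝ)^t else 0) := by
          rw [Finset.mul_sum, Finset.mul_sum, Finset.mul_sum]
          refine Finset.sum_congr rfl fun t _ => ?_
          by_cases h : K t ≤ k <;> simp [h] <;> ring
    refine le_trans h1 ?_
    rw [← Finset.mul_sum, Finset.sum_comm]
    apply le_of_eq
    congr 1
    refine Finset.sum_congr rfl fun t ht => ?_
    rw [mem_range] at ht
    obtain ⟨hK1, hK2, _⟩ := hKmem t (by omega)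
    rw [← Finset.sum_filter]
    have hfilter : (Icc 1 n).filter (fun k => K t ≤ k) = Icc ((K t - 1)+1) n := by
      ext k
      simp only [mem_filter, mem_Icc]
      omega
    rw [hfilter, Finset.sum_congr rfl (fun k _ => mul_comm (d k) ((2:ℝ)^t)),
      ← Finset.mul_sum, htel (K t - 1) (by omega)]
  have step3 : 2*c*∑ t ∈ range (T+1), (2:ℝ)^t * y' (K t - 1) ≤
      2*c*∑ t ∈ range (T+1), ((2:ℝ)^t / (K t : ℝ)) * S (K t) := by
    apply mul_le_mul_of_nonneg_left _ (by positivity)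
    refine Finset.sum_le_sum fun t ht => ?_
    rw [mem_range] at ht
    obtain ⟨hK1, hK2, _⟩ := hKmem t (by omega)
    have hKr : (0:ℝ) < (K t : ℝ) := by exact_mod_cast hK1
    have := hSy (K t)
    rw [div_mul_eq_mul_div, le_div_iff₀ hKr]
    calc (2:ℝ)^t * y' (K t - 1) * (K t : ℝ)
        = (2:ℝ)^t * ((K t : ℝ) * y' (K t - 1)) := by ring
    _ ≤ (2:ℝ)^t * S (K t) := mul_le_mul_of_nonneg_left this (by positivity)
  have hG : ∑ i, a i * y i = 2*c*∑ t ∈ range (T+1), ((2:ℝ)^t / (K t : ℝ)) * S (K t) := by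
    have h1 : ∑ i, a i * y i = ∑ m ∈ range n,
        (2*c*∑ t ∈ range (T+1), (if m < K t then (2:ℝ)^t / (K t : ℝ) else 0)) * y' m := by
      rw [← Fin.sum_univ_eq_sum_range (fun m =>
        (2*c*∑ t ∈ range (T+1), (if m < K t then (2:ℝ)^t / (K t : ℝ) else 0)) * y' m) n]
      refine Finset.sum_congr rfl fun i _ => ?_
      simp [ha, hy', i.isLt]
    rw [h1]
    have h2 : ∀ m ∈ range n,
        (2*c*∑ t ∈ range (T+1), (if m < K t then (2:ℝ)^t / (K t : ℝ) else 0)) * y' m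
        = 2*c*∑ t ∈ range (T+1), (if m < K t then ((2:ℝ)^t / (K t : ℝ)) * y' m else 0) := by
      intro m _
      rw [mul_assoc (2*c), Finset.sum_mul]
      congr 1
      refine Finset.sum_congr rfl fun t _ => ?_
      by_cases h : m < K t <;> simp [h]
    rw [Finset.sum_congr rfl h2]
    have h3 : ∑ m ∈ range n, (2*c*∑ t ∈ range (T+1),
        (if m < K t then ((2:ℝ)^t / (K t : ℝ)) * y' m else 0))
        = 2*c*∑ m ∈ range n, ∑ t ∈ range (T+1),
        (if m < K t then ((2:ℝ)^t / (K t : ℝ)) * y' m else 0) :=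
      (Finset.mul_sum _ _ _).symm
    rw [h3, Finset.sum_comm]
    congr 1
    refine Finset.sum_congr rfl fun t ht => ?_
    rw [mem_range] at ht
    obtain ⟨hK1, hK2, _⟩ := hKmem t (by omega)
    rw [← Finset.sum_filter]
    have hfilter : (range n).filter (fun m => m < K t) = range (K t) := by
      ext m
      simp only [mem_filter, mem_range]
      omega
    rw [hfilter, ← Finset.mul_sum]
  constructor
  · rw [← hfy, hG]
    exact le_trans step1 (le_trans step2 step3)
  · have hupper : ∀ t ∈ range (T+1), ((2:ℝ)^t / (K t : ℝ)) * S (K t) ≤ f y / c := by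
      intro t ht
      rw [mem_range] at ht
      obtain ⟨hK1, hK2, hK3⟩ := hKmem t (by omega)
      have hKr : (0:ℝ) < (K t : ℝ) := by exact_mod_cast hK1
      have hschur := schur_step f h_tri h_hom h_sym h_mono (K t) hK1 hK2 y hynn
      have hSB : S (K t) * B (K t) ≤ (K t : ℝ) * f y := hschur
      rw [div_mul_eq_mul_div, div_le_div_iff₀ hKr hcpos]
      nlinarith [hSnn (K t), hSB, hK3]
    have h1 : ∑ t ∈ range (T+1), ((2:ℝ)^t / (K t : ℝ)) * S (K t)
        ≤ (T+1 : ℝ) * (f y / c) := by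
      calc ∑ t ∈ range (T+1), ((2:ℝ)^t / (K t : ℝ)) * S (K t)
          ≤ ∑ _t ∈ range (T+1), f y / c := Finset.sum_le_sum hupper
      _ = (T+1 : ℝ) * (f y / c) := by
          rw [Finset.sum_const, card_range, nsmul_eq_mul]
          push_cast
          ring
    have hgoal : ∑ i, a i * y i ≤ 2 * ((T:ℝ) + 1) * f y := by
      rw [hG]
      calc 2*c*∑ t ∈ range (T+1), ((2:ℝ)^t / (K t : ℝ)) * S (K t)
          ≤ 2*c*((T+1 : ℝ) * (f y / c)) :=
            mul_le_mul_of_nonneg_left h1 (by positivity)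
      _ = 2*((T:ℝ)+1)*(c*(f y / c)) := by ring
      _ = 2 * ((T:ℝ) + 1) * f y := by rw [mul_div_cancel₀ _ (ne_of_gt hcpos)]
    have hfin : 2 * ((T:ℝ) + 1) * f y ≤ 2 * (Real.logb 2 ρ + 1) * f y := by
      nlinarith [hTle, hfynn]
    have hf1 : f (fun _ => (1:ℝ)) = B n := by
      rw [show B n = f (χ n) from rfl, hχn]
    have hρeq : Real.logb 2 (f (fun _ => 1) / c) = Real.logb 2 ρ := by
      rw [hρ, hf1]
    rw [← hfy, hρeq]
    exact le_trans hgoal hfin
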